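/- For f : ℝ × ℝ → ℝ, define the Lorentzian metric g_f on ℝ³ (coordinates (x,y,z)) as the map assigning to each point p = (x,y,z) the symmetric bilinear form on ℝ³ given by g_f(p)(u,v) = −2·f(x,y)·u₁v₁ + u₂v₂ + u₁v₃ + u₃v₁. Let M = ℝ × (0,∞) × ℝ and f(x,y) = ln(y). Then for every λ > 0 and x₀, z₀ ∈ ℝ, the map T(x,y,z) = (λ·x + x₀, λ·y, λ·z + z₀ + λ·(ln λ)·x) maps M bijectively onto M and is a homothety of g_f with factor λ²: for every p ∈ M and all u, v ∈ ℝ³, g_f(T(p))(DT_p u, DT_p v) = λ²·g_f(p)(u, v), where DT_p is the Fréchet derivative of T at p. -/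

import Mathlib

/-- The Walker Lorentzian metric on `ℝ³` determined by `f`:
`g_f(p)(u,v) = -2 f(x,y) u₁v₁ + u₂v₂ + u₁v₃ + u₃v₁` at `p = (x,y,z)`. -/
def gWalker (f : ℝ × ℝ → ℝ) (p : ℝ × ℝ × ℝ) (u v : ℝ × ℝ × ℝ) : ℝ :=
  -2 * f (p.1, p.2.1) * u.1 * v.1 + u.2.1 * v.2.1 + u.1 * v.2.2 + u.2.2 * v.1

theorem stmt7 (f : ℝ × ℝ → ℝ) (hf : ∀ q : ℝ × ℝ, f q = Real.log q.2)
    (M : Set (ℝ × ℝ × ℝ)) (hM : M = {p : ℝ × ℝ × ℝ | 0 < p.2.1})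
    (lam x₀ z₀ : ℝ) (hlam : 0 < lam)
    (T : ℝ × ℝ × ℝ → ℝ × ℝ × ℝ)
    (hT : ∀ p : ℝ × ℝ × ℝ, T p =
      (lam * p.1 + x₀, lam * p.2.1, lam * p.2.2 + z₀ + lam * Real.log lam * p.1)) :
    Set.BijOn T M M ∧
    ∀ p ∈ M, ∀ u v : ℝ × ℝ × ℝ,
      gWalker f (T p) (fderiv ℝ T p u) (fderiv ℝ T p v) = lam ^ 2 * gWalker f p u v := by
  have hlam' : lam ≠ 0 := ne_of_gt hlam
  constructor
  · refine ⟨?_, ?_, ?_⟩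
    · intro p hp
      rw [hM] at hp ⊢
      rw [hT]
      exact mul_pos hlam hp
    · intro p _ q _ h
      rw [hT p, hT q] at h
      simp only [Prod.mk.injEq] at h
      obtain ⟨h1, h2, h3⟩ := h
      have e1 : p.1 = q.1 := by
        have := mul_left_cancel₀ hlam' (by linarith : lam * p.1 = lam * q.1); exact this
      have e2 : p.2.1 = q.2.1 := mul_left_cancel₀ hlam' h2
      have e3 : p.2.2 = q.2.2 := by
        rw [e1] at h3
        have : lam * p.2.2 = lam * q.2.2 := by linarith
        exact mul_left_cancel₀ hlam' this
      exact Prod.ext e1 (Prod.ext e2 e3)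
    · intro q hq
      rw [hM] at hq
      refine ⟨((q.1 - x₀) / lam, q.2.1 / lam,
        (q.2.2 - z₀ - lam * Real.log lam * ((q.1 - x₀) / lam)) / lam), ?_, ?_⟩
      · rw [hM]
        exact div_pos hq hlam
      · rw [hT]
        refine Prod.ext (by field_simp; ring) (Prod.ext (by field_simp) ?_)
        simp only
        field_simp
        ring
  · intro p hp u v
    rw [hM] at hp
    -- the derivative of T
    set fst' := ContinuousLinearMap.fst ℝ ℝ (ℝ × ℝ)
    set snd' := ContinuousLinearMap.snd ℝ ℝ (ℝ × ℝ)
    set fst2 := ContinuousLinearMap.fst ℝ ℝ ℝ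
    set snd2 := ContinuousLinearMap.snd ℝ ℝ ℝ
    set L : (ℝ × ℝ × ℝ) →L[ℝ] (ℝ × ℝ × ℝ) :=
      (lam • fst').prod (((lam • fst2).comp snd').prod
        ((lam • snd2).comp snd' + (lam * Real.log lam) • fst')) with hL
    have hD : HasFDerivAt T L p := by
      have : T = fun q => L q + (x₀, 0, z₀) := by
        funext q
        rw [hT]
        simp [hL, fst', snd', fst2, snd2, Prod.ext_iff]
        ring
      rw [this]
      exact L.hasFDerivAt.add_const _
    rw [hD.fderiv]
    have hLapp : ∀ w : ℝ × ℝ × ℝ, L w =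
        (lam * w.1, lam * w.2.1, lam * w.2.2 + lam * Real.log lam * w.1) := by
      intro w
      simp [hL, fst', snd', fst2, snd2]
    rw [hLapp u, hLapp v]
    simp only [gWalker, hT, hf]
    have hlog : Real.log (lam * p.2.1) = Real.log lam + Real.log p.2.1 :=
      Real.log_mul hlam' (ne_of_gt hp)
    rw [hlog]
    ring
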